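/- arXiv:1810.03573 — 4 statements merged into one kernel-verified Lean document; each statement's English description precedes it below -/
import Mathlib

section
/- Let u and v be nonempty palindromes such that u is a proper prefix of v and |u| ≥ |v|/2. Define n = ⌈|v|/2⌉ and k = ⌈|u|/2⌉ if |u| is odd, k = |u|/2 + 1 if |u| is even; and define ρ(u,v) = v[n]v[n−1]⋯v[k+1]v[k]v[k]v[k+1]⋯v[n−1]v[n] if |u| is even, and ρ(u,v) = v[n]v[n−1]⋯v[k+1]v[k]v[k+1]⋯v[n−1]v[n] if |u| is odd. Then if u₁, u₂, v₁, v₂ are nonempty palindromes with |v₁| = |v₂|, u₁ a proper prefix of v₁ with |u₁| ≥ |v₁|/2, u₂ a proper prefix of v₂ with |u₂| ≥ |v₂|/2, and ρ(u₁,v₁) = ρ(u₂,v₂), it follows that v₁ = v₂. In other words, the palindrome ρ(u,v) together with the length |v| uniquely determines the palindrome v. -/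
namespace RichWords

/-- A word over the alphabet `A`: either finite or infinite. -/
inductive Word (A : Type*) where
  | fin : List A → Word A
  | inf : (ℕ → A) → Word A

/-- `w.Factor u` : the finite word `u` is a factor of the word `w`. -/
def Word.Factor {A : Type*} : Word A → List A → Prop
  | .fin v, u => u <:+: v
  | .inf f, u => ∃ i : ℕ, u = List.ofFn (fun j : Fin u.length => f (i + (j : ℕ)))

/-- `F w n` : the set of factors of length `n` of the word `w`. -/
def F {A : Type*} (w : Word A) (n : ℕ) : Set (List A) :=
  {u | w.Factor u ∧ u.length = n}

/-- `Fp w n` : the set of palindromic factors of length `n` of the word `w`. -/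
def Fp {A : Type*} (w : Word A) (n : ℕ) : Set (List A) :=
  {u | u ∈ F w n ∧ u.reverse = u}

/-- A finite word of length `m` is rich if it contains `m + 1` distinct palindromic
factors (the empty word included). -/
def RichList {A : Type*} (v : List A) : Prop :=
  {u | u <:+: v ∧ u.reverse = u}.ncard = v.length + 1

/-- A word (finite or infinite) is rich: a finite word is rich as above, and an
infinite word is rich if every finite factor of it is rich. -/
def Word.Rich {A : Type*} : Word A → Prop
  | .fin v => RichList v
  | .inf f => ∀ u : List A, (Word.inf f).Factor u → RichList u

/-- `gamma w n` : the set of `u`-switches of length `n` of `w`, i.e. factors of the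
form `a u b` with `a ≠ b` letters and `u` a palindrome; empty for `n ≤ 2`. -/
def gamma {A : Type*} (w : Word A) (n : ℕ) : Set (List A) :=
  {v | 2 < n ∧ v ∈ F w n ∧
    ∃ (a b : A) (u : List A), a ≠ b ∧ v = a :: (u ++ [b]) ∧ u.reverse = u}

/-- `gammaBar w n` : the set of pairs `(u, c)` such that `a u b ∈ gamma w n`
for some letters `a ≠ b` with `c ∈ {a, b}`. -/
def gammaBar {A : Type*} (w : Word A) (n : ℕ) : Set (List A × A) :=
  {p | ∃ a b : A, a ≠ b ∧ (a :: (p.1 ++ [b])) ∈ gamma w n ∧ (p.2 = a ∨ p.2 = b)}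

/-- `Gam w n = max {1, max {|gamma w i| : 0 ≤ i ≤ n}}`. -/
noncomputable def Gam {A : Type*} (w : Word A) (n : ℕ) : ℕ :=
  max 1 ((Finset.range (n + 1)).sup fun i => (gamma w i).ncard)

/-- `trim v` removes the first and the last letter of `v`. -/
def trim {A : Type*} (v : List A) : List A := (v.drop 1).dropLast

/-- `IsLpps u r` : `r` is the longest proper palindromic suffix of `u`
(for `|u| ≤ 1` it is the empty word). -/
def IsLpps {A : Type*} (u r : List A) : Prop :=
  if u.length ≤ 1 then r = []
  else r <:+ u ∧ r.reverse = r ∧ r ≠ u ∧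
    ∀ s : List A, s <:+ u → s.reverse = s → s ≠ u → s.length ≤ r.length

/-- `seg v k n = v[k] v[k+1] ⋯ v[n]` (1-based indexing). -/
def seg {A : Type*} (v : List A) (k n : ℕ) : List A := (v.drop (k - 1)).take (n + 1 - k)

/-- `rho u v` for a palindromic proper prefix `u` of `v` with `|u| ≥ |v| / 2`:
with `n = ⌈|v|/2⌉` and `k = ⌈|u|/2⌉` if `|u|` is odd, `k = |u|/2 + 1` if `|u|` is even,
`rho u v = v[n]⋯v[k]v[k]⋯v[n]` if `|u|` is even and `v[n]⋯v[k]⋯v[n]` if `|u|` is odd. -/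
def rho {A : Type*} (u v : List A) : List A :=
  let n := (v.length + 1) / 2
  let k := if u.length % 2 = 1 then (u.length + 1) / 2 else u.length / 2 + 1
  let s := seg v k n
  if u.length % 2 = 1 then s.reverse ++ s.tail else s.reverse ++ s


/-- Index-mapping function: from an index `i` of `v` to the index of `rho u v`
holding the same letter. -/
private def phiAux (m q k i : ℕ) : ℕ :=
  let p := m - q
  let n := (m + 1) / 2
  let j := (k - 1) + (i + p * m - (k - 1)) % p
  if j ≤ n - 1 then n - 1 - j else j - (m - n)

private lemma seg_getElem? {A : Type*} (v : List A) (k n t : ℕ) (ht : t < n + 1 - k) :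
    (seg v k n)[t]? = v[k - 1 + t]? := by
  simp only [seg]
  rw [List.getElem?_take, if_pos ht, List.getElem?_drop]

private lemma segrev_getElem? {A : Type*} (v : List A) (k n t : ℕ)
    (hk1 : 1 ≤ k) (ht : t + k ≤ n) (hn : n ≤ v.length) :
    (seg v k n).reverse[t]? = v[n - 1 - t]? := by
  have hlen : (seg v k n).length = n + 1 - k := by simp [seg]; omega
  rw [List.getElem?_reverse (by rw [hlen]; omega), hlen,
    seg_getElem? v k n _ (by omega)]
  have hidx : k - 1 + (n + 1 - k - 1 - t) = n - 1 - t := by omega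
  rw [hidx]

private lemma core {A : Type*} (v r : List A) (q k : ℕ)
    (hpv : v.reverse = v) (hq1 : 1 ≤ q) (hq : q < v.length)
    (hper : v.drop (v.length - q) = v.take q)
    (hk1 : q + 1 ≤ 2 * k) (hk2 : 2 * k ≤ q + 2)
    (hrget : ∀ t, t + k ≤ (v.length + 1) / 2 → r[t]? = v[(v.length + 1) / 2 - 1 - t]?) :
    ∀ i, i < v.length → r[phiAux v.length q k i]? = v[i]? := by
  intro i hi
  have hstep : ∀ a, a < q → v[a + (v.length - q)]? = v[a]? := by
    intro a ha
    calc v[a + (v.length - q)]? = v[(v.length - q) + a]? := by rw [Nat.add_comm]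
      _ = (v.drop (v.length - q))[a]? := List.getElem?_drop.symm
      _ = (v.take q)[a]? := by rw [hper]
      _ = v[a]? := by rw [List.getElem?_take, if_pos ha]
  have hshift : ∀ t a, a + t * (v.length - q) < v.length →
      v[a + t * (v.length - q)]? = v[a]? := by
    intro t
    induction t with
    | zero => intro a _; simp
    | succ t ih =>
      intro a ha
      have he : a + (t + 1) * (v.length - q) = (a + t * (v.length - q)) + (v.length - q) := by
        ring
      rw [he, hstep (a + t * (v.length - q)) (by omega)]
      exact ih a (by omega)
  have hmod : ∀ a b, a < v.length → b < v.length →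
      a % (v.length - q) = b % (v.length - q) → v[a]? = v[b]? := by
    have key : ∀ a b, a ≤ b → b < v.length →
        a % (v.length - q) = b % (v.length - q) → v[a]? = v[b]? := by
      intro a b hab hb h
      obtain ⟨t, ht⟩ := (Nat.modEq_iff_dvd' hab).mp h
      rw [Nat.mul_comm] at ht
      have hb' : b = a + t * (v.length - q) := by omega
      rw [hb']
      exact (hshift t a (by omega)).symm
    intro a b ha hb h
    rcases Nat.le_total a b with hab | hab
    · exact key a b hab hb h
    · exact (key b a hab ha h.symm).symm
  have hrefl : ∀ a, a < v.length → v[a]? = v[v.length - 1 - a]? := by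
    intro a ha
    conv_lhs => rw [← hpv]
    exact List.getElem?_reverse ha
  simp only [phiAux]
  set j := (k - 1) + (i + (v.length - q) * v.length - (k - 1)) % (v.length - q) with hjdef
  have hrlt : (i + (v.length - q) * v.length - (k - 1)) % (v.length - q) < v.length - q :=
    Nat.mod_lt _ (by omega)
  have hdm := Nat.div_add_mod (i + (v.length - q) * v.length - (k - 1)) (v.length - q)
  have hpm : v.length ≤ (v.length - q) * v.length := Nat.le_mul_of_pos_left v.length (by omega)
  have h1 : i + (v.length - q) * v.length
      = j + (v.length - q) *
        ((i + (v.length - q) * v.length - (k - 1)) / (v.length - q)) := by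
    omega
  have hij : i % (v.length - q) = j % (v.length - q) := by
    have h2 := Nat.add_mul_mod_self_left j (v.length - q)
      ((i + (v.length - q) * v.length - (k - 1)) / (v.length - q))
    rw [← h1] at h2
    rw [← h2, Nat.add_mul_mod_self_left]
  have hjm : j < v.length := by omega
  by_cases hc : j ≤ (v.length + 1) / 2 - 1
  · rw [if_pos hc, hrget ((v.length + 1) / 2 - 1 - j) (by omega),
      hmod i j hi hjm hij]
    have hidx : (v.length + 1) / 2 - 1 - ((v.length + 1) / 2 - 1 - j) = j := by omega
    rw [hidx]
  · rw [if_neg hc, hrget (j - (v.length - (v.length + 1) / 2)) (by omega),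
      hmod i j hi hjm hij, hrefl j hjm]
    have hidx : (v.length + 1) / 2 - 1 - (j - (v.length - (v.length + 1) / 2))
        = v.length - 1 - j := by omega
    rw [hidx]

private lemma rho_spec {A : Type*} (u v : List A)
    (hu : u ≠ []) (hpu : u.reverse = u) (hpv : v.reverse = v)
    (hpre : u <+: v) (hne : u ≠ v) :
    (rho u v).length + u.length = 2 * ((v.length + 1) / 2) ∧
      ∀ i, i < v.length →
        (rho u v)[phiAux v.length u.length
          (if u.length % 2 = 1 then (u.length + 1) / 2 else u.length / 2 + 1) i]? = v[i]? := by
  have hq1 : 1 ≤ u.length := List.length_pos_iff.mpr hu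
  have hqm : u.length < v.length :=
    lt_of_le_of_ne hpre.length_le fun h => hne (hpre.eq_of_length h)
  obtain ⟨w, hw⟩ := hpre
  have hvw : w.reverse ++ u = v := by
    have h := congrArg List.reverse hw
    rw [List.reverse_append, hpu, hpv] at h
    exact h
  have hwl : w.reverse.length = v.length - u.length := by
    have h := congrArg List.length hw
    simp only [List.length_append, List.length_reverse] at h ⊢
    omega
  have hper : v.drop (v.length - u.length) = v.take u.length := by
    have hd : v.drop (v.length - u.length) = u := by
      rw [← hwl]
      conv_lhs => rw [← hvw]
      exact List.drop_left
    have ht : v.take u.length = u := by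
      conv_lhs => rw [← hw]
      exact List.take_left
    rw [hd, ht]
  rcases Nat.mod_two_eq_zero_or_one u.length with h2 | h2
  · -- even case
    have hk : (if u.length % 2 = 1 then (u.length + 1) / 2 else u.length / 2 + 1)
        = u.length / 2 + 1 := by simp [h2]
    have hrho : rho u v = (seg v (u.length / 2 + 1) ((v.length + 1) / 2)).reverse
        ++ seg v (u.length / 2 + 1) ((v.length + 1) / 2) := by
      simp [rho, h2]
    have hseglen : (seg v (u.length / 2 + 1) ((v.length + 1) / 2)).length
        = (v.length + 1) / 2 + 1 - (u.length / 2 + 1) := by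
      simp [seg]; omega
    constructor
    · rw [hrho]
      simp only [List.length_append, List.length_reverse, hseglen]
      omega
    · rw [hk]
      refine core v (rho u v) u.length (u.length / 2 + 1) hpv hq1 hqm hper
        (by omega) (by omega) ?_
      intro t ht
      rw [hrho, List.getElem?_append_left (by rw [List.length_reverse, hseglen]; omega)]
      exact segrev_getElem? v _ _ t (by omega) (by omega) (by omega)
  · -- odd case
    have hk : (if u.length % 2 = 1 then (u.length + 1) / 2 else u.length / 2 + 1)
        = (u.length + 1) / 2 := by simp [h2]
    have hrho : rho u v = (seg v ((u.length + 1) / 2) ((v.length + 1) / 2)).reverse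
        ++ (seg v ((u.length + 1) / 2) ((v.length + 1) / 2)).tail := by
      simp [rho, h2]
    have hseglen : (seg v ((u.length + 1) / 2) ((v.length + 1) / 2)).length
        = (v.length + 1) / 2 + 1 - (u.length + 1) / 2 := by
      simp [seg]; omega
    constructor
    · rw [hrho]
      simp only [List.length_append, List.length_reverse, List.length_tail, hseglen]
      omega
    · rw [hk]
      refine core v (rho u v) u.length ((u.length + 1) / 2) hpv hq1 hqm hper
        (by omega) (by omega) ?_
      intro t ht
      rw [hrho, List.getElem?_append_left (by rw [List.length_reverse, hseglen]; omega)]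
      exact segrev_getElem? v _ _ t (by omega) (by omega) (by omega)


/-- the palindrome `rho u v` together with the length `|v|` uniquely
determines the palindrome `v`. -/
theorem rho_determines_palindrome {A : Type*} (u₁ u₂ v₁ v₂ : List A)
    (hu₁ : u₁ ≠ []) (hu₂ : u₂ ≠ []) (hv₁ : v₁ ≠ []) (hv₂ : v₂ ≠ [])
    (hpu₁ : u₁.reverse = u₁) (hpu₂ : u₂.reverse = u₂)
    (hpv₁ : v₁.reverse = v₁) (hpv₂ : v₂.reverse = v₂)
    (hlen : v₁.length = v₂.length)
    (hpre₁ : u₁ <+: v₁) (hne₁ : u₁ ≠ v₁) (hhalf₁ : v₁.length ≤ 2 * u₁.length)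
    (hpre₂ : u₂ <+: v₂) (hne₂ : u₂ ≠ v₂) (hhalf₂ : v₂.length ≤ 2 * u₂.length)
    (hrho : rho u₁ v₁ = rho u₂ v₂) :
    v₁ = v₂ := by
  have hs₁ := rho_spec u₁ v₁ hu₁ hpu₁ hpv₁ hpre₁ hne₁
  have hs₂ := rho_spec u₂ v₂ hu₂ hpu₂ hpv₂ hpre₂ hne₂
  have hrl := congrArg List.length hrho
  have hql : u₁.length = u₂.length := by
    have h1 := hs₁.1
    have h2 := hs₂.1
    omega
  apply List.ext_getElem?
  intro i
  by_cases hi : i < v₁.length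
  · have e₁ := hs₁.2 i hi
    have e₂ := hs₂.2 i (by omega)
    rw [← e₁, ← e₂, hrho, hlen, hql]
  · rw [List.getElem?_eq_none (by omega), List.getElem?_eq_none (by omega)]

end RichWords
end

section
/- For every integer n ≥ 1, with k = ⌊log₂ n⌋, one has ∏_{j=1}^{k} ⌈n/2ʲ⌉ ≤ (2√n)^{log₂ n}. -/
/-- For every integer `n ≥ 1`, with `k = ⌊log₂ n⌋`, one has
`∏_{j=1}^{k} ⌈n / 2ʲ⌉ ≤ (2 √n) ^ (log₂ n)`. -/
theorem prod_ceil_le_two_sqrt_pow_log (n : ℕ) (hn : 1 ≤ n) :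
    ((∏ j ∈ Finset.Icc 1 (Nat.log 2 n), ⌈(n : ℝ) / 2 ^ j⌉₊ : ℕ) : ℝ)
      ≤ (2 * Real.sqrt n) ^ Real.logb 2 n := by
  have hn0 : (0:ℝ) < n := by exact_mod_cast hn
  set k := Nat.log 2 n with hk
  set L := Real.logb 2 n with hLdef
  have h2L : (2:ℝ) ^ L = n := Real.rpow_logb (by norm_num) (by norm_num) hn0
  have hpow : (2:ℕ) ^ k ≤ n := Nat.pow_log_le_self 2 (by omega)
  have hpowR : (2:ℝ) ^ k ≤ n := by exact_mod_cast hpow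
  have hkL : (k:ℝ) ≤ L := by
    have : Real.logb 2 ((2:ℝ) ^ k) ≤ L :=
      Real.logb_le_logb_of_le one_lt_two (by positivity) hpowR
    rwa [← Real.rpow_natCast 2 k, Real.logb_rpow (by norm_num) (by norm_num)] at this
  -- step 1: cast and bound the product
  rw [Nat.cast_prod]
  have step1 : ∏ j ∈ Finset.Icc 1 k, ((⌈(n:ℝ)/2^j⌉₊ : ℕ) : ℝ)
      ≤ ∏ j ∈ Finset.Icc 1 k, (2:ℝ) ^ (1 + L - j) := by
    apply Finset.prod_le_prod
    · intro j _; positivity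
    · intro j hj
      simp only [Finset.mem_Icc] at hj
      have hx0 : (0:ℝ) ≤ (n:ℝ)/2^j := by positivity
      have hx1 : (1:ℝ) ≤ (n:ℝ)/2^j := by
        rw [le_div_iff₀ (by positivity)]
        have : (2:ℝ)^j ≤ (2:ℝ)^k := by
          apply pow_le_pow_right₀ (by norm_num) hj.2
        linarith
      have hceil : ((⌈(n:ℝ)/2^j⌉₊ : ℕ) : ℝ) ≤ 2 * ((n:ℝ)/2^j) := by
        have := Nat.ceil_lt_add_one hx0
        linarith
      have heq : (2:ℝ) ^ (1 + L - (j:ℝ)) = 2 * ((n:ℝ)/2^j) := by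
        rw [show (1:ℝ) + L - j = 1 + L + (-(j:ℝ)) by ring,
          Real.rpow_add (by norm_num), Real.rpow_add (by norm_num),
          Real.rpow_neg (by norm_num), Real.rpow_natCast, Real.rpow_one, h2L]
        ring
      rw [heq]; exact hceil
  -- step 2: collapse the product of powers
  have step2 : ∏ j ∈ Finset.Icc 1 k, (2:ℝ) ^ (1 + L - j)
      = (2:ℝ) ^ (∑ j ∈ Finset.Icc 1 k, (1 + L - (j:ℝ))) :=
    (Real.rpow_sum_of_pos (by norm_num) _ _).symm
  -- sum computation
  have hsum : ∑ j ∈ Finset.Icc 1 k, ((j:ℕ):ℝ) = (k:ℝ) * (k+1) / 2 := by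
    have h1 : ∑ j ∈ Finset.Icc 1 k, (j:ℕ) = ∑ j ∈ Finset.range (k+1), j := by
      rw [← Finset.Ico_add_one_right_eq_Icc, Finset.range_eq_Ico]
      rw [Finset.sum_Ico_eq_sum_range, Finset.sum_Ico_eq_sum_range]
      simp only [Nat.succ_sub_one, Nat.sub_zero, zero_add]
      rw [Finset.sum_range_succ' (fun x => x) k]
      simp [add_comm]
    have h2 : (∑ j ∈ Finset.range (k+1), j) * 2 = (k+1) * k :=
      Finset.sum_range_id_mul_two (k+1)
    have : (∑ j ∈ Finset.Icc 1 k, (j:ℕ) : ℕ) * 2 = (k+1) * k := by rw [h1]; exact h2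
    have := congrArg (Nat.cast (R := ℝ)) this
    push_cast at this
    rw [← Nat.cast_sum] at *
    push_cast at *
    linarith
  have hsum2 : ∑ j ∈ Finset.Icc 1 k, (1 + L - (j:ℝ)) = (1+L)*k - (k:ℝ)*(k+1)/2 := by
    rw [Finset.sum_sub_distrib, Finset.sum_const, Nat.card_Icc]
    rw [hsum]
    simp
    ring
  -- RHS
  have hRHS : (2 * Real.sqrt n) ^ L = (2:ℝ) ^ (L + L^2/2) := by
    have hs : Real.sqrt (n:ℝ) = (2:ℝ) ^ (L/2) := by
      rw [Real.sqrt_eq_rpow, ← h2L, ← Real.rpow_mul (by norm_num)]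
      ring_nf
    rw [hs, Real.mul_rpow (by norm_num) (by positivity),
        ← Real.rpow_mul (by norm_num), ← Real.rpow_add (by norm_num)]
    ring_nf
  calc ∏ j ∈ Finset.Icc 1 k, ((⌈(n:ℝ)/2^j⌉₊ : ℕ) : ℝ)
      ≤ (2:ℝ) ^ (∑ j ∈ Finset.Icc 1 k, (1 + L - (j:ℝ))) := by rw [← step2]; exact step1
    _ ≤ (2:ℝ) ^ (L + L^2/2) := by
        rw [hsum2, Real.rpow_le_rpow_left_iff one_lt_two]
        have hk0 : (0:ℝ) ≤ k := Nat.cast_nonneg k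
        nlinarith [sq_nonneg (L - k)]
    _ = (2 * Real.sqrt n) ^ L := hRHS.symm
end

section
/- Let w be a rich word with |w| ≥ n+1 and n > 0, and suppose the set F(w,n+1) of factors of w of length n+1 is closed under reversal. Then |F_p(w,n)| + |F_p(w,n+1)| = |F(w,n+1)| − |F(w,n)| + 2. -/
open scoped Classical


namespace RichWords

/-- palindromic factors -/
def Pal {A : Type*} (v : List A) : Set (List A) := {u | u <:+: v ∧ u.reverse = u}

section Aux
variable {A : Type*}

lemma finite_infix (v : List A) : {u : List A | u <:+: v}.Finite := by
  apply Set.Finite.subset v.sublists.finite_toSet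
  intro u hu
  simpa using hu.sublist

lemma finite_pal (v : List A) : (Pal v).Finite :=
  (finite_infix v).subset fun u hu => hu.1

lemma eq_concat_of_ne_nil {l : List A} (h : l ≠ []) : ∃ L b, l = L ++ [b] := by
  rcases l.eq_nil_or_concat with rfl | ⟨L, b, rfl⟩
  · exact absurd rfl h
  · exact ⟨L, b, by simp⟩

lemma prefix_of_concat_eq {y d w : List A} {c : A} (hd : d ≠ []) (h : y ++ d = w ++ [c]) :
    y <+: w := by
  obtain ⟨d', c', rfl⟩ := eq_concat_of_ne_nil hd
  rw [show y ++ (d' ++ [c']) = (y ++ d') ++ [c'] by simp] at h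
  obtain ⟨h1, _⟩ := List.append_inj' h rfl
  exact h1 ▸ ⟨d', rfl⟩

lemma infix_concat {u w : List A} {c : A} (h : u <:+: w ++ [c]) :
    u <:+: w ∨ u <:+ (w ++ [c]) := by
  obtain ⟨y, z, hyz⟩ := h
  rcases eq_or_ne z [] with rfl | hz
  · right; exact ⟨y, by simpa using hyz⟩
  · left
    obtain ⟨z', c', rfl⟩ := eq_concat_of_ne_nil hz
    rw [show y ++ u ++ (z' ++ [c']) = (y ++ u ++ z') ++ [c'] by simp] at hyz
    obtain ⟨h1, _⟩ := List.append_inj' hyz rfl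
    exact ⟨y, z', h1⟩

lemma suffix_eq_of_length {u v w : List A} (h1 : u <:+ w) (h2 : v <:+ w)
    (h : u.length = v.length) : u = v :=
  (List.suffix_of_suffix_length_le h1 h2 h.le).eq_of_length h

/-- the suffix of length `j` -/
def sfx (j : ℕ) (w : List A) : List A := w.drop (w.length - j)

lemma sfx_suffix (j : ℕ) (w : List A) : sfx j w <:+ w := List.drop_suffix _ _

lemma sfx_length {j : ℕ} {w : List A} (h : j ≤ w.length) : (sfx j w).length = j := by
  simp [sfx]; omega

lemma eq_sfx_of_suffix {u w : List A} {j : ℕ} (h : u <:+ w) (hl : u.length = j)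
    (hj : j ≤ w.length) : u = sfx j w :=
  suffix_eq_of_length h (sfx_suffix j w) (by rw [hl, sfx_length hj])

/-- maximal palindromic suffix exists -/
lemma exists_max_pal_suffix {w : List A} (hw : w ≠ []) :
    ∃ r, r <:+ w ∧ r.reverse = r ∧ r ≠ [] ∧
      ∀ q, q <:+ w → q.reverse = q → q.length ≤ r.length := by
  classical
  obtain ⟨w', c, rfl⟩ := eq_concat_of_ne_nil hw
  set T : Finset (List A) :=
    (w' ++ [c]).tails.toFinset.filter (fun q => q.reverse = q) with hT
  have hmemT : ∀ q, q ∈ T ↔ (q <:+ w' ++ [c] ∧ q.reverse = q) := by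
    intro q
    rw [hT, Finset.mem_filter, List.mem_toFinset, List.mem_tails]
  have hne : T.Nonempty := ⟨[c], (hmemT [c]).mpr ⟨⟨w', rfl⟩, rfl⟩⟩
  obtain ⟨r, hrT, hmax⟩ := T.exists_max_image List.length hne
  obtain ⟨hr1, hr2⟩ := (hmemT r).mp hrT
  refine ⟨r, hr1, hr2, ?_, ?_⟩
  · intro h
    have := hmax [c] ((hmemT [c]).mpr ⟨⟨w', rfl⟩, rfl⟩)
    simp [h] at this
  · intro q hq hqp
    exact hmax q ((hmemT q).mpr ⟨hq, hqp⟩)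

lemma pal_suffix_prefix {q r w : List A} (hq : q <:+ w) (hr : r <:+ w)
    (hqp : q.reverse = q) (hrp : r.reverse = r) (hlen : q.length ≤ r.length) : q <+: r := by
  have h1 : q <:+ r := List.suffix_of_suffix_length_le hq hr hlen
  have h2 := h1.reverse
  rwa [hqp, hrp] at h2

/-- key: palindromic factors of `w ++ [c]` are factors of `w` or equal to the
maximal palindromic suffix `r`. -/
lemma pal_concat_subset {w : List A} {c : A} {r : List A}
    (hr : r <:+ w ++ [c]) (hrp : r.reverse = r)
    (hmax : ∀ q, q <:+ w ++ [c] → q.reverse = q → q.length ≤ r.length) :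
    Pal (w ++ [c]) ⊆ insert r (Pal w) := by
  rintro u ⟨hinf, hup⟩
  rcases infix_concat hinf with h | h
  · exact Set.mem_insert_of_mem _ ⟨h, hup⟩
  · have hlen : u.length ≤ r.length := hmax u h hup
    rcases eq_or_lt_of_le hlen with heq | hlt
    · left
      exact suffix_eq_of_length h hr heq
    · right
      have hpre : u <+: r := pal_suffix_prefix h hr hup hrp hlen
      obtain ⟨d, rfl⟩ := hpre
      have hd : d ≠ [] := by
        rintro rfl; simp at hlt
      obtain ⟨y, hy⟩ := hr
      rw [show y ++ (u ++ d) = (y ++ u) ++ d by simp] at hy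
      have := prefix_of_concat_eq hd hy
      exact ⟨((List.suffix_append y u).isInfix).trans this.isInfix, hup⟩

lemma pal_count_le (v : List A) : (Pal v).ncard ≤ v.length + 1 := by
  induction v using List.reverseRecOn with
  | nil =>
    have : Pal ([] : List A) = {([] : List A)} := by
      ext u; simp [Pal, List.infix_nil]
      rintro rfl; rfl
    simp [this]
  | append_singleton w c ih =>
    obtain ⟨r, hr1, hr2, _, hmax⟩ := exists_max_pal_suffix (by simp : w ++ [c] ≠ [])
    calc (Pal (w ++ [c])).ncard ≤ (insert r (Pal w)).ncard :=
          Set.ncard_le_ncard (pal_concat_subset hr1 hr2 hmax) ((finite_pal w).insert r)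
      _ ≤ (Pal w).ncard + 1 := Set.ncard_insert_le r _
      _ ≤ w.length + 1 + 1 := by omega
      _ = (w ++ [c]).length + 1 := by simp

lemma richList_iff (v : List A) : RichList v ↔ (Pal v).ncard = v.length + 1 := Iff.rfl

lemma rich_concat {w : List A} {c : A} (h : RichList (w ++ [c])) : RichList w := by
  rw [richList_iff] at h ⊢
  obtain ⟨r, hr1, hr2, _, hmax⟩ := exists_max_pal_suffix (by simp : w ++ [c] ≠ [])
  have h1 : (Pal (w ++ [c])).ncard ≤ (Pal w).ncard + 1 :=
    le_trans (Set.ncard_le_ncard (pal_concat_subset hr1 hr2 hmax) ((finite_pal w).insert r))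
      (Set.ncard_insert_le r _)
  have h2 := pal_count_le w
  simp only [List.length_append, List.length_singleton] at h
  omega

lemma rich_lps_unioccurrent {w : List A} {c : A} (h : RichList (w ++ [c])) {r : List A}
    (hr : r <:+ w ++ [c]) (hrp : r.reverse = r)
    (hmax : ∀ q, q <:+ w ++ [c] → q.reverse = q → q.length ≤ r.length) :
    ¬ r <:+: w := by
  intro hocc
  have hsub : Pal (w ++ [c]) ⊆ Pal w := by
    intro u hu
    rcases pal_concat_subset hr hrp hmax hu with rfl | h'
    · exact ⟨hocc, hrp⟩
    · exact h'
  have h1 : (Pal (w ++ [c])).ncard ≤ (Pal w).ncard :=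
    Set.ncard_le_ncard hsub (finite_pal w)
  rw [richList_iff] at h
  have h2 := pal_count_le w
  simp only [List.length_append, List.length_singleton] at h
  omega



variable {A : Type*}

lemma mem_F {w : List A} {j : ℕ} {u : List A} :
    u ∈ F (Word.fin w) j ↔ u <:+: w ∧ u.length = j := Iff.rfl

lemma finite_F (w : List A) (j : ℕ) : (F (Word.fin w) j).Finite :=
  (finite_infix w).subset fun _ hu => hu.1

lemma finite_Fp (w : List A) (j : ℕ) : (Fp (Word.fin w) j).Finite :=
  (finite_F w j).subset fun _ hu => hu.1

/-- symmetrized factor set -/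
def SS (w : List A) (j : ℕ) : Set (List A) :=
  {u | u.length = j ∧ (u <:+: w ∨ u.reverse <:+: w)}

lemma finite_SS (w : List A) (j : ℕ) : (SS w j).Finite := by
  apply Set.Finite.subset ((finite_infix w).union ((finite_infix w).image List.reverse))
  rintro u ⟨-, h | h⟩
  · exact Or.inl h
  · exact Or.inr ⟨u.reverse, h, by simp⟩

lemma SS_rev {w : List A} {j : ℕ} {u : List A} (h : u ∈ SS w j) : u.reverse ∈ SS w j := by
  obtain ⟨h1, h2 | h2⟩ := h
  · exact ⟨by simpa using h1, Or.inr (by simpa using h2)⟩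
  · exact ⟨by simpa using h1, Or.inl h2⟩

lemma pal_mem_SS_infix {w : List A} {j : ℕ} {u : List A} (h : u ∈ SS w j)
    (hp : u.reverse = u) : u <:+: w := by
  obtain ⟨-, h2 | h2⟩ := h
  · exact h2
  · rwa [hp] at h2

lemma F_concat {w : List A} {c : A} {j : ℕ} (hj : j ≤ w.length + 1) :
    F (Word.fin (w ++ [c])) j = insert (sfx j (w ++ [c])) (F (Word.fin w) j) := by
  have hlen : (w ++ [c]).length = w.length + 1 := by simp
  ext u
  simp only [mem_F, Set.mem_insert_iff]
  constructor
  · rintro ⟨hinf, hul⟩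
    rcases infix_concat hinf with h | h
    · exact Or.inr ⟨h, hul⟩
    · exact Or.inl (eq_sfx_of_suffix h hul (hlen ▸ hj))
  · rintro (rfl | ⟨h, hul⟩)
    · exact ⟨(sfx_suffix _ _).isInfix, sfx_length (hlen ▸ hj)⟩
    · exact ⟨h.trans (List.prefix_append w [c]).isInfix, hul⟩

lemma SS_concat {w : List A} {c : A} {j : ℕ} (hj : j ≤ w.length + 1) :
    SS (w ++ [c]) j =
      insert (sfx j (w ++ [c])) (insert (sfx j (w ++ [c])).reverse (SS w j)) := by
  have hlen : (w ++ [c]).length = w.length + 1 := by simp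
  have hsl : (sfx j (w ++ [c])).length = j := sfx_length (hlen ▸ hj)
  ext u
  simp only [SS, Set.mem_insert_iff, Set.mem_setOf_eq]
  constructor
  · rintro ⟨hul, h | h⟩
    · rcases infix_concat h with h' | h'
      · exact Or.inr (Or.inr ⟨hul, Or.inl h'⟩)
      · exact Or.inl (eq_sfx_of_suffix h' hul (hlen ▸ hj))
    · rcases infix_concat h with h' | h'
      · exact Or.inr (Or.inr ⟨hul, Or.inr h'⟩)
      · have : u.reverse = sfx j (w ++ [c]) :=
          eq_sfx_of_suffix h' (by simpa using hul) (hlen ▸ hj)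
        exact Or.inr (Or.inl (by rw [← this, List.reverse_reverse]))
  · rintro (rfl | rfl | ⟨hul, h | h⟩)
    · exact ⟨hsl, Or.inl (sfx_suffix _ _).isInfix⟩
    · exact ⟨by simpa using hsl, Or.inr (by simpa using (sfx_suffix j (w ++ [c])).isInfix)⟩
    · exact ⟨hul, Or.inl (h.trans (List.prefix_append w [c]).isInfix)⟩
    · exact ⟨hul, Or.inr (h.trans (List.prefix_append w [c]).isInfix)⟩

lemma SS_ncard_concat {w : List A} {c : A} {j : ℕ} (hj : j ≤ w.length + 1) :
    (SS (w ++ [c]) j).ncard = (SS w j).ncard +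
      (if sfx j (w ++ [c]) ∈ SS w j then 0
       else if (sfx j (w ++ [c])).reverse = sfx j (w ++ [c]) then 1 else 2) := by
  set s := sfx j (w ++ [c]) with hs
  rw [SS_concat hj]
  by_cases h1 : s ∈ SS w j
  · rw [Set.insert_eq_self.mpr (Set.mem_insert_of_mem _ h1),
      Set.insert_eq_self.mpr (SS_rev h1), if_pos h1]
    omega
  · rw [if_neg h1]
    have h2 : s.reverse ∉ SS w j := fun h => h1 (by simpa using SS_rev h)
    by_cases hp : s.reverse = s
    · rw [if_pos hp, hp, Set.insert_idem,
        Set.ncard_insert_of_notMem h1 (finite_SS w j)]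
    · rw [if_neg hp]
      have h3 : s ∉ insert s.reverse (SS w j) := by
        simp only [Set.mem_insert_iff]
        rintro (h | h)
        · exact hp h.symm
        · exact h1 h
      rw [Set.ncard_insert_of_notMem h3 ((finite_SS w j).insert _),
        Set.ncard_insert_of_notMem h2 (finite_SS w j)]

lemma Fp_ncard_concat {w : List A} {c : A} {j : ℕ} (hj : j ≤ w.length + 1) :
    (Fp (Word.fin (w ++ [c])) j).ncard = (Fp (Word.fin w) j).ncard +
      (if (sfx j (w ++ [c])).reverse = sfx j (w ++ [c]) ∧ ¬ sfx j (w ++ [c]) <:+: w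
       then 1 else 0) := by
  set s := sfx j (w ++ [c]) with hs
  have hlen : (w ++ [c]).length = w.length + 1 := by simp
  have hsl : s.length = j := sfx_length (hlen ▸ hj)
  by_cases hp : s.reverse = s
  · have heq : Fp (Word.fin (w ++ [c])) j = insert s (Fp (Word.fin w) j) := by
      ext u
      simp only [Fp, Set.mem_setOf_eq, F_concat hj, Set.mem_insert_iff]
      constructor
      · rintro ⟨rfl | h, hup⟩
        · exact Or.inl rfl
        · exact Or.inr ⟨h, hup⟩
      · rintro (rfl | ⟨h, hup⟩)
        · exact ⟨Or.inl rfl, hp⟩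
        · exact ⟨Or.inr h, hup⟩
    rw [heq]
    by_cases hocc : s <:+: w
    · have hmem : s ∈ Fp (Word.fin w) j := ⟨⟨hocc, hsl⟩, hp⟩
      rw [Set.insert_eq_self.mpr hmem, if_neg (by tauto)]
      omega
    · rw [Set.ncard_insert_of_notMem (fun h => hocc h.1.1) (finite_Fp w j),
        if_pos ⟨hp, hocc⟩]
  · have heq : Fp (Word.fin (w ++ [c])) j = Fp (Word.fin w) j := by
      ext u
      simp only [Fp, Set.mem_setOf_eq, F_concat hj, Set.mem_insert_iff]
      constructor
      · rintro ⟨rfl | h, hup⟩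
        · exact absurd hup hp
        · exact ⟨h, hup⟩
      · rintro ⟨h, hup⟩
        exact ⟨Or.inr h, hup⟩
    rw [heq, if_neg (by tauto)]
    omega

lemma key_arith (P1 P2 P3 Q1 Q2 Q3 : Prop)
    (i1 : P1 → Q1) (i2 : P2 → Q2)
    (is1 : P3 → P2 → P1) (it1 : Q3 → Q2 → Q1)
    (Y : (¬P1 ∧ ¬P2 ∧ ¬P3) ↔ (¬Q1 ∧ ¬Q2)) :
    (if Q3 ∧ ¬Q1 then 1 else 0) + (if P3 ∧ ¬P1 then 1 else 0)
      + (if Q1 ∨ Q2 then 0 else if Q3 then 1 else 2)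
      = (if P1 ∨ P2 then 0 else if P3 then 1 else 2) := by
  by_cases h1 : P1 <;> by_cases h2 : P2 <;> by_cases h3 : P3 <;>
    by_cases h4 : Q1 <;> by_cases h5 : Q2 <;> by_cases h6 : Q3 <;>
    simp only [h1, h2, h3, h4, h5, h6, not_true, not_false_iff, true_and, and_true,
      false_and, and_false, true_or, or_true, false_or, or_false, if_true, if_false,
      not_false_eq_true, iff_true, iff_false, true_iff, false_iff] at Y ⊢ <;>
    first | rfl | omega | tauto

lemma stepY {w : List A} {c : A} (hrich : RichList (w ++ [c])) {n : ℕ}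
    (hnw : n ≤ w.length) :
    ((¬ sfx (n+1) (w ++ [c]) <:+: w) ∧ (¬ (sfx (n+1) (w ++ [c])).reverse <:+: w) ∧
      (sfx (n+1) (w ++ [c])).reverse ≠ sfx (n+1) (w ++ [c]))
    ↔ ((¬ sfx n (w ++ [c]) <:+: w) ∧ ¬ (sfx n (w ++ [c])).reverse <:+: w) := by
  set s := sfx (n+1) (w ++ [c]) with hs
  set t := sfx n (w ++ [c]) with ht
  have hlen : (w ++ [c]).length = w.length + 1 := by simp
  have hsl : s.length = n + 1 := sfx_length (by omega)
  have htl : t.length = n := sfx_length (by omega)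
  have hts : t <:+ s :=
    List.suffix_of_suffix_length_le (sfx_suffix _ _) (sfx_suffix _ _) (by omega)
  constructor
  · rintro ⟨hs1, hs2, hs3⟩
    obtain ⟨r, hr1, hr2, hr3, hmax⟩ := exists_max_pal_suffix (show w ++ [c] ≠ [] by simp)
    have hrn : r.length ≤ n := by
      by_contra hcon
      push_neg at hcon
      have hsr : s <:+ r := List.suffix_of_suffix_length_le (sfx_suffix _ _) hr1 (by omega)
      rcases eq_or_lt_of_le (show s.length ≤ r.length by omega) with heq | hlt
      · have hseq : s = r := hsr.eq_of_length heq
        exact hs3 (by rw [hseq]; exact hr2)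
      · have hpre : s.reverse <+: r := by
          have := hsr.reverse
          rwa [hr2] at this
        obtain ⟨z, hz⟩ := hpre
        have hzne : z ≠ [] := by
          rintro rfl
          rw [List.append_nil] at hz
          have := congrArg List.length hz
          simp [hsl] at this
          omega
        obtain ⟨y, hy⟩ := hr1
        rw [← hz, show y ++ (s.reverse ++ z) = (y ++ s.reverse) ++ z by simp] at hy
        have hpw : y ++ s.reverse <+: w := prefix_of_concat_eq hzne hy
        exact hs2 (((List.suffix_append y s.reverse).isInfix).trans hpw.isInfix)
    have hrt : r <:+ t :=
      List.suffix_of_suffix_length_le hr1 (sfx_suffix _ _) (by omega)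
    have runi : ¬ r <:+: w := rich_lps_unioccurrent hrich hr1 hr2 hmax
    refine ⟨fun h => runi (hrt.isInfix.trans h), fun h => runi ?_⟩
    have hpre : r <+: t.reverse := by
      have := hrt.reverse
      rwa [hr2] at this
    exact hpre.isInfix.trans h
  · rintro ⟨ht1, ht2⟩
    refine ⟨fun h => ht1 (hts.isInfix.trans h), fun h => ht2 ?_, fun hpal => ht2 ?_⟩
    · exact (hts.reverse.isInfix).trans h
    · have hpre : t.reverse <+: s := by
        have := hts.reverse
        rwa [hpal] at this
      obtain ⟨d, hd⟩ := hpre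
      have hdl : d.length = 1 := by
        have := congrArg List.length hd
        simp [hsl, htl] at this
        omega
      obtain ⟨d0, rfl⟩ := List.length_eq_one_iff.mp hdl
      obtain ⟨y, hy⟩ := sfx_suffix (n+1) (w ++ [c])
      rw [← hs] at hy
      rw [← hd, show y ++ (t.reverse ++ [d0]) = (y ++ t.reverse) ++ [d0] by simp] at hy
      obtain ⟨h1, -⟩ := List.append_inj' hy rfl
      exact (List.suffix_append y t.reverse).isInfix.trans (h1 ▸ List.infix_refl w)

lemma main_identity (n : ℕ) (hn : 1 ≤ n) (w : List A) :
    RichList w → n ≤ w.length →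
    (Fp (Word.fin w) n).ncard + (Fp (Word.fin w) (n+1)).ncard + (SS w n).ncard
      = (SS w (n+1)).ncard + 2 := by
  induction w using List.reverseRecOn with
  | nil => intro _ h; simp at h; omega
  | append_singleton w c ih =>
    intro hrich hlen
    have hlen' : (w ++ [c]).length = w.length + 1 := by simp
    rw [hlen'] at hlen
    rcases eq_or_lt_of_le hlen with heq | hlt
    · -- base case : n = |w ++ [c]|
      set v := w ++ [c] with hv
      have hvlen : v.length = n := by rw [hlen', heq]
      have hFk : F (Word.fin v) (n+1) = ∅ := by
        rw [Set.eq_empty_iff_forall_notMem]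
        rintro u ⟨hinf, hul⟩
        have := hinf.length_le
        omega
      have hFpk : Fp (Word.fin v) (n+1) = ∅ := by
        rw [Set.eq_empty_iff_forall_notMem]
        rintro u ⟨hu, -⟩
        rw [hFk] at hu
        exact hu
      have hSk : SS v (n+1) = ∅ := by
        rw [Set.eq_empty_iff_forall_notMem]
        rintro u ⟨hul, h | h⟩
        · have := h.length_le; omega
        · have := h.length_le; simp at this; omega
      have huniq : ∀ u : List A, u <:+: v → u.length = n → u = v := by
        intro u hu hul
        exact hu.eq_of_length (by omega)
      have hSn : SS v n = {v, v.reverse} := by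
        ext u
        simp only [SS, Set.mem_setOf_eq, Set.mem_insert_iff, Set.mem_singleton_iff]
        constructor
        · rintro ⟨hul, h | h⟩
          · exact Or.inl (huniq u h hul)
          · right
            have := huniq u.reverse h (by simpa using hul)
            rw [← this, List.reverse_reverse]
        · rintro (rfl | rfl)
          · exact ⟨hvlen, Or.inl (List.infix_refl v)⟩
          · exact ⟨by simpa using hvlen, Or.inr (by simpa using List.infix_refl v)⟩
      have hFn : F (Word.fin v) n = {v} := by
        ext u
        simp only [mem_F, Set.mem_singleton_iff]
        constructor
        · rintro ⟨h, hul⟩; exact huniq u h hul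
        · rintro rfl; exact ⟨List.infix_refl v, hvlen⟩
      by_cases hp : v.reverse = v
      · have hFpn : Fp (Word.fin v) n = {v} := by
          ext u
          simp only [Fp, Set.mem_setOf_eq, hFn, Set.mem_singleton_iff]
          constructor
          · rintro ⟨rfl, -⟩; rfl
          · rintro rfl; exact ⟨rfl, hp⟩
        rw [hFpn, hFpk, hSn, hSk, hp]
        simp
      · have hFpn : Fp (Word.fin v) n = ∅ := by
          rw [Set.eq_empty_iff_forall_notMem]
          rintro u ⟨hu, hup⟩
          rw [hFn, Set.mem_singleton_iff] at hu
          subst hu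
          exact hp hup
        rw [hFpn, hFpk, hSn, hSk]
        rw [Set.ncard_pair (fun h => hp h.symm)]
        simp
    · -- inductive step : n ≤ |w|
      have hnw : n ≤ w.length := by omega
      have hw' : RichList w := rich_concat hrich
      have IH := ih hw' hnw
      have hk := SS_ncard_concat (w := w) (c := c) (j := n+1) (by omega)
      have hn2 := SS_ncard_concat (w := w) (c := c) (j := n) (by omega)
      have hpk := Fp_ncard_concat (w := w) (c := c) (j := n+1) (by omega)
      have hpn := Fp_ncard_concat (w := w) (c := c) (j := n) (by omega)
      set s := sfx (n+1) (w ++ [c]) with hs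
      set t := sfx n (w ++ [c]) with ht
      have hY := stepY hrich hnw
      rw [← hs, ← ht] at hY
      have hslen : s.length = n + 1 := sfx_length (by simp; omega)
      have htlen : t.length = n := sfx_length (by simp; omega)
      have hts : t <:+ s :=
        List.suffix_of_suffix_length_le (sfx_suffix _ _) (sfx_suffix _ _) (by omega)
      have hsSS : (s ∈ SS w (n+1)) = (s <:+: w ∨ s.reverse <:+: w) := by
        simp [SS, hslen]
      have htSS : (t ∈ SS w n) = (t <:+: w ∨ t.reverse <:+: w) := by
        simp [SS, htlen]
      rw [hk, hn2, hpk, hpn, hsSS, htSS]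
      clear_value s t
      have impl1 : s <:+: w → t <:+: w := fun h => hts.isInfix.trans h
      have impl2 : s.reverse <:+: w → t.reverse <:+: w :=
        fun h => (hts.reverse.isInfix).trans h
      have himps : s.reverse = s → s.reverse <:+: w → s <:+: w := fun h h2 => h ▸ h2
      have himps' : s.reverse = s → s <:+: w → s.reverse <:+: w := fun h h2 => h.symm ▸ h2
      have himpt : t.reverse = t → t.reverse <:+: w → t <:+: w := fun h h2 => h ▸ h2
      have himpt' : t.reverse = t → t <:+: w → t.reverse <:+: w := fun h h2 => h.symm ▸ h2
      have hkey := key_arith (s <:+: w) (s.reverse <:+: w) (s.reverse = s)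
        (t <:+: w) (t.reverse <:+: w) (t.reverse = t)
        impl1 impl2 (fun h h2 => himps h h2) (fun h h2 => himpt h h2) hY
      linarith [IH, hkey]

lemma closure_down {w : List A} {n : ℕ} (hlen : n + 1 ≤ w.length)
    (hcl : ∀ u ∈ F (Word.fin w) (n + 1), u.reverse ∈ F (Word.fin w) (n + 1)) :
    ∀ u ∈ F (Word.fin w) n, u.reverse ∈ F (Word.fin w) n := by
  rintro u ⟨⟨y, z, hyz⟩, hul⟩
  rcases eq_or_ne z [] with rfl | hz
  · have hy : y ≠ [] := by
      rintro rfl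
      simp only [List.nil_append, List.append_nil] at hyz
      rw [← hyz] at hlen
      omega
    obtain ⟨y', a, rfl⟩ := eq_concat_of_ne_nil hy
    have hmem : (a :: u) ∈ F (Word.fin w) (n+1) :=
      ⟨⟨y', [], by simpa using hyz⟩, by simp [hul]⟩
    obtain ⟨⟨y2, z2, hy2⟩, -⟩ := hcl _ hmem
    refine ⟨⟨y2, [a] ++ z2, ?_⟩, by simp [hul]⟩
    rw [show (a :: u).reverse = u.reverse ++ [a] by simp] at hy2
    rw [← hy2]; simp
  · obtain ⟨b, z', rfl⟩ : ∃ b z', z = b :: z' := by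
      cases z with
      | nil => exact absurd rfl hz
      | cons b z' => exact ⟨b, z', rfl⟩
    have hmem : (u ++ [b]) ∈ F (Word.fin w) (n+1) :=
      ⟨⟨y, z', by rw [← hyz]; simp⟩, by simp [hul]⟩
    obtain ⟨⟨y2, z2, hy2⟩, -⟩ := hcl _ hmem
    refine ⟨⟨y2 ++ [b], z2, ?_⟩, by simp [hul]⟩
    rw [show (u ++ [b]).reverse = b :: u.reverse by simp] at hy2
    rw [← hy2]; simp

lemma SS_eq_F {w : List A} {j : ℕ}
    (hcl : ∀ u ∈ F (Word.fin w) j, u.reverse ∈ F (Word.fin w) j) :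
    SS w j = F (Word.fin w) j := by
  ext u
  constructor
  · rintro ⟨hul, h | h⟩
    · exact ⟨h, hul⟩
    · have := hcl u.reverse ⟨h, by simpa using hul⟩
      simpa using this
  · rintro ⟨h, hul⟩
    exact ⟨hul, Or.inl h⟩


end Aux

/-- If `w` is a rich word with `|w| ≥ n + 1`, `n > 0`, and `F(w, n+1)`
closed under reversal, then `|F_p(w,n)| + |F_p(w,n+1)| = |F(w,n+1)| - |F(w,n)| + 2`. -/
theorem palindromes_vs_factors_rich_eq {A : Type*} (w : List A) (hw : RichList w)
    (n : ℕ) (hn : 0 < n) (hlen : n + 1 ≤ w.length)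
    (hcl : ∀ u ∈ F (Word.fin w) (n + 1), u.reverse ∈ F (Word.fin w) (n + 1)) :
    ((Fp (Word.fin w) n).ncard : ℤ) + ((Fp (Word.fin w) (n + 1)).ncard : ℤ)
      = ((F (Word.fin w) (n + 1)).ncard : ℤ) - ((F (Word.fin w) n).ncard : ℤ) + 2 := by
  have h := main_identity n hn w hw (by omega)
  rw [SS_eq_F hcl, SS_eq_F (closure_down hlen hcl)] at h
  omega

end RichWords
end

section
/- Let w be a rich word over an alphabet with q > 1 letters such that F(w,n+1) is closed under reversal, |w| ≥ n+1, and n > 0. Let F̂_p(w,k) = max{ |F_p(w,j)| : 0 ≤ j ≤ k }. Then |F(w,n)| ≤ 2(n−1)·F̂_p(w,n) − 2(n−1) + q. -/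
namespace RichWords

section Aux

variable {A : Type*}

/-- `fo w u` : the first (least) end position of an occurrence of `u` in `w`,
where `u` occurs ending at `e` iff `u` is a suffix of `w.take e`. -/
noncomputable def fo (w u : List A) : ℕ := sInf {e | u <:+ w.take e}

lemma infix_iff_exists_take {w u : List A} :
    u <:+: w ↔ ∃ e, e ≤ w.length ∧ u <:+ w.take e := by
  constructor
  · rintro ⟨s, t, rfl⟩
    refine ⟨s.length + u.length, by simp only [List.length_append]; omega, ?_⟩
    have : (s ++ u ++ t).take (s.length + u.length) = s ++ u :=
      List.take_left' (by simp)
    rw [this]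
    exact List.suffix_append s u
  · rintro ⟨e, _, h⟩
    exact h.isInfix.trans (List.take_prefix e w).isInfix

lemma fo_suffix_take {w u : List A} (h : u <:+: w) : u <:+ w.take (fo w u) := by
  obtain ⟨e, _, he⟩ := infix_iff_exists_take.1 h
  have hne : {e | u <:+ w.take e}.Nonempty := ⟨e, he⟩
  exact Nat.sInf_mem hne

lemma fo_le {w u : List A} {e : ℕ} (h : u <:+ w.take e) : fo w u ≤ e := Nat.sInf_le h

lemma fo_le_length {w u : List A} (h : u <:+: w) : fo w u ≤ w.length := by
  obtain ⟨e, he, h'⟩ := infix_iff_exists_take.1 h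
  exact (fo_le h').trans he

lemma length_le_fo {w u : List A} (h : u <:+: w) : u.length ≤ fo w u := by
  have := (fo_suffix_take h).length_le
  rw [List.length_take] at this
  omega

lemma fo_nil (w : List A) : fo w [] = 0 :=
  Nat.le_zero.1 (fo_le (by simp))

/-- two suffixes of the same list are comparable; shorter is a suffix of longer. -/
lemma suffix_of_suffix_length_le {p u v : List A} (hu : u <:+ p) (hv : v <:+ p)
    (h : u.length ≤ v.length) : u <:+ v := by
  have hvl := hv.length_le
  rw [List.suffix_iff_eq_drop] at hu hv
  rw [hu, hv]
  have heq : p.length - u.length = (p.length - v.length) + (v.length - u.length) := by omega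
  rw [heq, ← List.drop_drop]
  exact List.drop_suffix _ _

lemma suffix_eq_of_length_eq {p u v : List A} (hu : u <:+ p) (hv : v <:+ p)
    (h : u.length = v.length) : u = v := by
  rw [List.suffix_iff_eq_drop] at hu hv
  rw [hu, hv, h]

lemma factors_finite (w : List A) : {u : List A | u <:+: w}.Finite :=
  (w.sublists.finite_toSet).subset fun u hu => List.mem_sublists.2 (List.IsInfix.sublist hu)


/-- The first-occurrence-end map is injective on palindromic factors. -/
lemma fo_injOn_pals (w : List A) :
    Set.InjOn (fo w) {u | u <:+: w ∧ u.reverse = u} := by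
  have key : ∀ u v : List A, u <:+: w → u.reverse = u → v <:+: w → v.reverse = v →
      fo w u = fo w v → u.length < v.length → False := by
    intro u v hu hpu hv hpv hfo hlt
    have hus : u <:+ w.take (fo w u) := fo_suffix_take hu
    have hvs : v <:+ w.take (fo w u) := by rw [hfo]; exact fo_suffix_take hv
    -- u is a suffix of v, hence (being palindromes) a prefix of v
    have huv : u <:+ v := suffix_of_suffix_length_le hus hvs hlt.le
    have hupv : u <+: v := by
      rw [← hpu, ← hpv]
      exact List.reverse_prefix.2 huv
    obtain ⟨z, hz⟩ := hvs
    obtain ⟨t, ht⟩ := hupv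
    -- w.take (z.length + u.length) = z ++ u , so u occurs ending earlier
    have hzu : z ++ u ++ t = w.take (fo w u) := by rw [← hz, ← ht, List.append_assoc]
    have hlen : z.length + u.length < fo w u := by
      have h1 : (w.take (fo w u)).length ≤ fo w u := by
        rw [List.length_take]; omega
      have h2 : (w.take (fo w u)).length = z.length + u.length + t.length := by
        rw [← hzu]; simp; omega
      have h4 : u.length + t.length = v.length := by rw [← ht]; simp
      omega
    have : u <:+ w.take (z.length + u.length) := by
      have : w.take (z.length + u.length) = z ++ u := by
        have h4 : (w.take (fo w u)).take (z.length + u.length) = z ++ u := by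
          rw [← hzu]; exact List.take_left' (by simp)
        rwa [List.take_take, Nat.min_eq_left hlen.le] at h4
      rw [this]
      exact List.suffix_append z u
    have := fo_le this
    omega
  intro u hu v hv hfo
  rcases lt_trichotomy u.length v.length with h | h | h
  · exact absurd (key u v hu.1 hu.2 hv.1 hv.2 hfo h) (by simp)
  · exact suffix_eq_of_length_eq (fo_suffix_take hu.1)
      (by rw [hfo]; exact fo_suffix_take hv.1) h
  · exact (key v u hv.1 hv.2 hu.1 hu.2 hfo.symm h).elim

/-- In a rich word, every position `1 ≤ e ≤ |w|` is the first-occurrence end of some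
nonempty palindromic factor (necessarily a suffix of `w.take e`). -/
lemma rich_novel {w : List A} (hw : RichList w) {e : ℕ} (h1 : 1 ≤ e) (he : e ≤ w.length) :
    ∃ r : List A, r.reverse = r ∧ r <:+ w.take e ∧ fo w r = e ∧ 1 ≤ r.length := by
  classical
  set P : Set (List A) := {u | u <:+: w ∧ u.reverse = u} with hP
  have hPfin : P.Finite := (factors_finite w).subset fun u hu => hu.1
  have himg : fo w '' P ⊆ ↑(Finset.range (w.length + 1)) := by
    rintro _ ⟨u, hu, rfl⟩
    simp only [Finset.coe_range, Set.mem_Iio]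
    exact Nat.lt_succ_of_le (fo_le_length hu.1)
  have hcard : (↑(Finset.range (w.length + 1)) : Set ℕ).ncard ≤ (fo w '' P).ncard := by
    rw [Set.ncard_image_of_injOn (fo_injOn_pals w), Set.ncard_coe_finset,
      Finset.card_range]
    exact le_of_eq hw.symm
  have heq : fo w '' P = ↑(Finset.range (w.length + 1)) :=
    Set.eq_of_subset_of_ncard_le himg hcard (Finset.range (w.length + 1)).finite_toSet
  have hemem : e ∈ fo w '' P := by
    rw [heq]; simp only [Finset.coe_range, Set.mem_Iio]; omega
  obtain ⟨r, hr, hfo⟩ := hemem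
  refine ⟨r, hr.2, ?_, hfo, ?_⟩
  · have := fo_suffix_take hr.1
    rwa [hfo] at this
  · rcases Nat.eq_zero_or_pos r.length with h0 | h0
    · exfalso
      rw [List.length_eq_zero_iff] at h0
      rw [h0, fo_nil] at hfo
      omega
    · exact h0


lemma ncard_biUnion_le {α β : Type*} (s : Finset α) (f : α → Set β) :
    (⋃ a ∈ s, f a).ncard ≤ ∑ a ∈ s, (f a).ncard := by
  classical
  induction s using Finset.induction_on with
  | empty => simp
  | @insert a t ha ih =>
    rw [Finset.sum_insert ha, Finset.set_biUnion_insert]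
    exact le_trans (Set.ncard_union_le _ _) (by omega)

lemma key_count (w : List A) (hw : RichList w) {n : ℕ} (hn : 1 ≤ n)
    (hlen : n + 1 ≤ w.length)
    (hclosed : ∀ u : List A, u <:+: w → u.length = n → u.reverse <:+: w) :
    (F (Word.fin w) n).ncard + 2 * (n - 1) + (Fp (Word.fin w) n).ncard
      ≤ 2 * ∑ j ∈ Finset.Icc 1 n, (Fp (Word.fin w) j).ncard := by
  classical
  set m := w.length with hm
  set Fn := F (Word.fin w) n with hFndef
  have hFnmem : ∀ u : List A, u ∈ Fn → u <:+: w ∧ u.length = n := fun u hu => hu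
  have hFnfin : Fn.Finite := (factors_finite w).subset (fun u hu => (hFnmem u hu).1)
  have hFpfin : ∀ j : ℕ, (Fp (Word.fin w) j).Finite :=
    fun j => (factors_finite w).subset (fun u hu => hu.1.1)
  -- the novel palindrome at each position
  have hrex : ∀ e : ℕ, 1 ≤ e ∧ e ≤ m → ∃ r : List A,
      r.reverse = r ∧ r <:+ w.take e ∧ fo w r = e ∧ 1 ≤ r.length :=
    fun e h => rich_novel hw h.1 h.2
  let r : ℕ → List A := fun e => if h : 1 ≤ e ∧ e ≤ m then (hrex e h).choose else []
  have hrpal : ∀ e : ℕ, 1 ≤ e → e ≤ m →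
      (r e).reverse = r e ∧ r e <:+ w.take e ∧ fo w (r e) = e ∧ 1 ≤ (r e).length := by
    intro e h1 h2
    have h : 1 ≤ e ∧ e ≤ m := ⟨h1, h2⟩
    simp only [r, dif_pos h]
    exact (hrex e h).choose_spec
  -- the canonical suffix of length n ending at e
  let sfx : ℕ → List A := fun e => (w.take e).drop ((w.take e).length - n)
  set E := fo w '' Fn with hEdef
  have hEfin : E.Finite := hFnfin.image _
  have hinjFn : Set.InjOn (fo w) Fn := by
    intro x hx y hy hxy
    exact suffix_eq_of_length_eq (fo_suffix_take hx.1)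
      (by rw [hxy]; exact fo_suffix_take hy.1) (hx.2.trans hy.2.symm)
  have hEcard : E.ncard = Fn.ncard := Set.ncard_image_of_injOn hinjFn
  have hsfx : ∀ e ∈ E, sfx e ∈ Fn ∧ fo w (sfx e) = e ∧ sfx e <:+ w.take e
      ∧ n ≤ e ∧ e ≤ m := by
    rintro e ⟨x, hx, rfl⟩
    have hxs : x <:+ w.take (fo w x) := fo_suffix_take hx.1
    have hxe : sfx (fo w x) = x := by
      have h1 := List.suffix_iff_eq_drop.1 hxs
      rw [hx.2] at h1
      exact h1.symm
    have hne : n ≤ fo w x := hx.2 ▸ length_le_fo hx.1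
    refine ⟨?_, ?_, ?_, hne, fo_le_length hx.1⟩
    · rw [hxe]; exact hx
    · rw [hxe]
    · rw [hxe]; exact hxs
  set Aset := {e ∈ E | (r e).length ≤ n} with hAdef
  set Sset := {e ∈ E | ¬ (r e).length ≤ n} with hSdef
  have hAfin : Aset.Finite := hEfin.subset (fun e he => he.1)
  have hSfin : Sset.Finite := hEfin.subset (fun e he => he.1)
  have hunion : Aset ∪ Sset = E := by
    ext e
    simp only [hAdef, hSdef, Set.mem_union, Set.mem_setOf_eq]
    tauto
  have hdisj : Disjoint Aset Sset := by
    rw [Set.disjoint_left]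
    rintro e ⟨_, h⟩ ⟨_, h'⟩
    exact h' h
  have hcardE : Aset.ncard + Sset.ncard = Fn.ncard := by
    rw [← Set.ncard_union_eq hdisj hAfin hSfin, hunion, hEcard]
  -- STEP 1 : |A| + (n-1) ≤ ∑_{j=1}^n P(j)
  set Icc1 : Set ℕ := Set.Icc 1 (n - 1) with hIdef
  have hIA_disj : Disjoint Aset Icc1 := by
    rw [Set.disjoint_left]
    rintro e ⟨heE, _⟩ heI
    have := (hsfx e heE).2.2.2.1
    have h2 : e ≤ n - 1 := heI.2
    omega
  have hrfacts : ∀ e ∈ Aset ∪ Icc1, 1 ≤ e ∧ e ≤ m := by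
    rintro e (⟨heE, _⟩ | heI)
    · have h := (hsfx e heE).2.2.2
      exact ⟨le_trans hn h.1, h.2⟩
    · exact ⟨heI.1, le_trans heI.2 (by omega)⟩
  have hrinj : Set.InjOn r (Aset ∪ Icc1) := by
    intro e he e' he' hre
    obtain ⟨h1, h2⟩ := hrfacts e he
    obtain ⟨h1', h2'⟩ := hrfacts e' he'
    rw [← (hrpal e h1 h2).2.2.1, ← (hrpal e' h1' h2').2.2.1, hre]
  have himgsub : r '' (Aset ∪ Icc1) ⊆ ⋃ j ∈ Finset.Icc 1 n, Fp (Word.fin w) j := by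
    rintro _ ⟨e, he, rfl⟩
    obtain ⟨h1, h2⟩ := hrfacts e he
    obtain ⟨hpal, hsuf, hfo, hlen1⟩ := hrpal e h1 h2
    have hinfix : r e <:+: w := hsuf.isInfix.trans (List.take_prefix e w).isInfix
    have hlen2 : (r e).length ≤ n := by
      rcases he with ⟨_, hA⟩ | heI
      · exact hA
      · have := hsuf.length_le
        rw [List.length_take] at this
        have h3 : e ≤ n - 1 := heI.2
        omega
    have : r e ∈ Fp (Word.fin w) ((r e).length) := ⟨⟨hinfix, rfl⟩, hpal⟩
    exact Set.mem_biUnion (Finset.mem_Icc.mpr ⟨hlen1, hlen2⟩) this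
  have hstep1 : Aset.ncard + (n - 1) ≤ ∑ j ∈ Finset.Icc 1 n, (Fp (Word.fin w) j).ncard := by
    have hI1fin : Icc1.Finite := Set.finite_Icc _ _
    have hIcard : Icc1.ncard = n - 1 := by
      rw [hIdef, ← Finset.coe_Icc, Set.ncard_coe_finset, Nat.card_Icc]
      omega
    have hU : (Aset ∪ Icc1).ncard = Aset.ncard + (n - 1) := by
      rw [Set.ncard_union_eq hIA_disj hAfin hI1fin, hIcard]
    calc Aset.ncard + (n - 1) = (r '' (Aset ∪ Icc1)).ncard := by
          rw [Set.ncard_image_of_injOn hrinj, hU]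
      _ ≤ (⋃ j ∈ Finset.Icc 1 n, Fp (Word.fin w) j).ncard := by
          refine Set.ncard_le_ncard himgsub ?_
          exact Set.Finite.biUnion (Finset.finite_toSet _) (fun j _ => hFpfin j)
      _ ≤ ∑ j ∈ Finset.Icc 1 n, (Fp (Word.fin w) j).ncard := ncard_biUnion_le _ _
  -- STEP 2 : 2|S| + |Fp n| ≤ |Fn|
  have hSkey : ∀ e ∈ Sset, fo w ((sfx e).reverse) < e := by
    rintro e ⟨heE, hlong⟩
    obtain ⟨hxF, hxfo, hxs, hne, hem⟩ := hsfx e heE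
    have h1e : 1 ≤ e := le_trans hn hne
    obtain ⟨hpal, hrs, hrfo, hrlen⟩ := hrpal e h1e hem
    push_neg at hlong
    have hsl : (sfx e).length = n := (hFnmem _ hxF).2
    have h2 : sfx e <:+ r e := suffix_of_suffix_length_le hxs hrs (by omega)
    have h3 : (sfx e).reverse <+: r e := by
      rw [← hpal]
      exact List.reverse_prefix.2 h2
    obtain ⟨z, hz⟩ := hrs
    obtain ⟨t, ht⟩ := h3
    have hw1 : z ++ (sfx e).reverse ++ t = w.take e := by
      rw [List.append_assoc, ht, hz]
    have hlenz : z.length + (r e).length = e := by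
      have h4 : (w.take e).length = e := by rw [List.length_take]; omega
      rw [← hz, List.length_append] at h4
      omega
    have hrt : n + t.length = (r e).length := by
      have h7 := congrArg List.length ht
      rw [List.length_append, List.length_reverse, hsl] at h7
      omega
    have hd : z.length + n < e := by omega
    have htake : w.take (z.length + n) = z ++ (sfx e).reverse := by
      have h4 : (w.take e).take (z.length + n) = z ++ (sfx e).reverse := by
        rw [← hw1]
        exact List.take_left' (by simp [hsl])
      rwa [List.take_take, Nat.min_eq_left hd.le] at h4
    have h5 : (sfx e).reverse <:+ w.take (z.length + n) := by
      rw [htake]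
      exact List.suffix_append _ _
    have := fo_le h5
    omega
  set I := sfx '' Sset with hIdef2
  have hIinj : Set.InjOn sfx Sset := by
    intro e he e' he' h
    rw [← (hsfx e he.1).2.1, ← (hsfx e' he'.1).2.1, h]
  have hInopal : ∀ u ∈ I, u.reverse ≠ u := by
    rintro _ ⟨e, he, rfl⟩ hpal
    have h1 := hSkey e he
    rw [hpal, (hsfx e he.1).2.1] at h1
    exact lt_irrefl _ h1
  have hIdisj : Disjoint I (List.reverse '' I) := by
    rw [Set.disjoint_left]
    rintro u ⟨e, he, rfl⟩ ⟨u', ⟨e', he', rfl⟩, hrev⟩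
    -- hrev : (sfx e').reverse = sfx e
    have l1 := hSkey e he
    have l2 := hSkey e' he'
    rw [hrev, (hsfx e he.1).2.1] at l2
    have h6 : sfx e' = (sfx e).reverse := by rw [← hrev, List.reverse_reverse]
    rw [← h6, (hsfx e' he'.1).2.1] at l1
    omega
  have hIsub : I ⊆ Fn := by
    rintro _ ⟨e, he, rfl⟩
    exact (hsfx e he.1).1
  have hIrevsub : List.reverse '' I ⊆ Fn := by
    rintro _ ⟨u, hu, rfl⟩
    have h := hFnmem u (hIsub hu)
    exact ⟨hclosed u h.1 h.2, by simp [h.2]⟩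
  have hPal_disj : Disjoint (I ∪ List.reverse '' I) (Fp (Word.fin w) n) := by
    rw [Set.disjoint_left]
    rintro u hu hupal
    rcases hu with hu | ⟨v, hv, rfl⟩
    · exact hInopal u hu hupal.2
    · have h8 : v.reverse = v := by
        have h9 := hupal.2
        rw [List.reverse_reverse] at h9
        exact h9.symm
      exact hInopal v hv h8
  have hstep2 : 2 * Sset.ncard + (Fp (Word.fin w) n).ncard ≤ Fn.ncard := by
    have hIfin : I.Finite := hSfin.image _
    have hIrevfin : (List.reverse '' I).Finite := hIfin.image _
    have c1 : I.ncard = Sset.ncard := Set.ncard_image_of_injOn hIinj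
    have c2 : (List.reverse '' I).ncard = I.ncard :=
      Set.ncard_image_of_injective _ List.reverse_injective
    have call : ((I ∪ List.reverse '' I) ∪ Fp (Word.fin w) n).ncard
        = Sset.ncard + Sset.ncard + (Fp (Word.fin w) n).ncard := by
      rw [Set.ncard_union_eq hPal_disj (hIfin.union hIrevfin) (hFpfin n),
        Set.ncard_union_eq hIdisj hIfin hIrevfin, c1, c2, c1]
    have hsub : (I ∪ List.reverse '' I) ∪ Fp (Word.fin w) n ⊆ Fn := by
      rintro u (hu | hu)
      · exact Set.union_subset hIsub hIrevsub hu
      · exact hu.1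
    have := Set.ncard_le_ncard hsub hFnfin
    omega
  omega


/-- any set of words of length 1 has at most `card A` elements -/
lemma ncard_le_card_of_length_one [Fintype A] [Nonempty A] (s : Set (List A))
    (hs : ∀ u ∈ s, u.length = 1) : s.ncard ≤ Fintype.card A := by
  classical
  letI : Inhabited A := Classical.inhabited_of_nonempty ‹_›
  have h : s.ncard ≤ (Set.univ : Set A).ncard := by
    apply Set.ncard_le_ncard_of_injOn (fun u => u.headI)
    · intro a _
      trivial
    · intro x hx y hy hxy
      obtain ⟨a, rfl⟩ := List.length_eq_one_iff.mp (hs x hx)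
      obtain ⟨b, rfl⟩ := List.length_eq_one_iff.mp (hs y hy)
      have hab : a = b := hxy
      rw [hab]
  simpa [Set.ncard_univ, Nat.card_eq_fintype_card] using h

/-- factors of length `n` extend to factors of length `n+1`, so closure of
`F (n+1)` under reversal gives closure for `F n`. -/
lemma closure_step (w : List A) {n : ℕ} (hlen : n + 1 ≤ w.length)
    (hcl : ∀ u ∈ F (Word.fin w) (n + 1), u.reverse ∈ F (Word.fin w) (n + 1)) :
    ∀ u : List A, u <:+: w → u.length = n → u.reverse <:+: w := by
  intro u hu hlu
  obtain ⟨s, t, hst⟩ := hu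
  have hext : ∃ v : List A, v <:+: w ∧ v.length = n + 1 ∧ u <:+: v := by
    cases t with
    | cons c t' =>
      refine ⟨u ++ [c], ⟨s, t', ?_⟩, by simp [hlu], ⟨[], [c], by simp⟩⟩
      rw [← hst]
      simp
    | nil =>
      have hs : s ≠ [] := by
        intro h0
        rw [h0] at hst
        simp at hst
        have := congrArg List.length hst
        simp [hlu] at this
        omega
      refine ⟨s.getLast hs :: u, ⟨s.dropLast, [], ?_⟩, by simp [hlu],
        ⟨[s.getLast hs], [], by simp⟩⟩
      rw [← hst]
      simp only [List.append_nil]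
      rw [show s.getLast hs :: u = [s.getLast hs] ++ u from rfl, ← List.append_assoc,
        List.dropLast_append_getLast hs]
  obtain ⟨v, hv, hvl, huv⟩ := hext
  have hv2 := hcl v ⟨hv, hvl⟩
  exact (List.reverse_infix.mpr huv).trans hv2.1


end Aux

/-- If `w` is a rich word over an alphabet with `q > 1` letters with
`F(w, n+1)` closed under reversal, `|w| ≥ n + 1` and `n > 0`, then
`|F(w,n)| ≤ 2(n-1) ⬝ F̂_p(w,n) - 2(n-1) + q`,
where `F̂_p(w, k) = max {|F_p(w, j)| : 0 ≤ j ≤ k}`. -/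
theorem factor_le_hat_palindromic {A : Type*} [Fintype A] (hq : 1 < Fintype.card A)
    (w : List A) (hw : RichList w) (n : ℕ) (hn : 0 < n) (hlen : n + 1 ≤ w.length)
    (hcl : ∀ u ∈ F (Word.fin w) (n + 1), u.reverse ∈ F (Word.fin w) (n + 1)) :
    ((F (Word.fin w) n).ncard : ℤ)
      ≤ 2 * ((n : ℤ) - 1)
            * (((Finset.range (n + 1)).sup fun j => (Fp (Word.fin w) j).ncard : ℕ) : ℤ)
        - 2 * ((n : ℤ) - 1) + (Fintype.card A : ℤ) := by
  classical
  haveI : Nonempty A := Fintype.card_pos_iff.mp (by omega)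
  obtain ⟨k, rfl⟩ : ∃ k, n = k + 1 := ⟨n - 1, by omega⟩
  set q := Fintype.card A with hq'
  set Phat := (Finset.range (k + 1 + 1)).sup (fun j => (Fp (Word.fin w) j).ncard) with hPhat
  set C := (F (Word.fin w) (k + 1)).ncard with hC
  rcases Nat.eq_zero_or_pos k with rfl | hk
  · -- n = 1 : C ≤ q suffices
    have h1 : C ≤ q := ncard_le_card_of_length_one _ (fun u hu => hu.2)
    push_cast
    have : ((C : ℤ)) ≤ (q : ℤ) := by exact_mod_cast h1
    linarith
  · -- n ≥ 2
    obtain ⟨j, rfl⟩ : ∃ j, k = j + 1 := ⟨k - 1, by omega⟩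
    set n' := j + 1 + 1 with hn'
    have hclosed := closure_step w hlen hcl
    have hkey := key_count w hw (n := n') (by omega) hlen hclosed
    -- notation for palindromic counts
    set P : ℕ → ℕ := fun i => (Fp (Word.fin w) i).ncard with hP
    have hP1q : P 1 ≤ q := ncard_le_card_of_length_one _ (fun u hu => hu.1.2)
    have hPle : ∀ i, i ≤ n' → P i ≤ Phat := fun i hi =>
      Finset.le_sup (Finset.mem_range.mpr (by omega))
    have hP1hat : P 1 ≤ Phat := hPle 1 (by omega)
    have hPnhat : P n' ≤ Phat := hPle n' le_rfl
    -- split the sum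
    have hsplit : ∑ i ∈ Finset.Icc 1 n', P i
        = P 1 + (∑ i ∈ Finset.Icc 2 (n' - 1), P i + P n') := by
      have e1 : insert 1 (Finset.Icc 2 n') = Finset.Icc 1 n' := by
        ext x
        simp only [Finset.mem_insert, Finset.mem_Icc]
        omega
      have e2 : insert n' (Finset.Icc 2 (n' - 1)) = Finset.Icc 2 n' := by
        ext x
        simp only [Finset.mem_insert, Finset.mem_Icc]
        omega
      rw [← e1, Finset.sum_insert (by simp only [Finset.mem_Icc]; omega), ← e2,
        Finset.sum_insert (by simp only [Finset.mem_Icc]; omega)]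
      ring
    have hmid : ∑ i ∈ Finset.Icc 2 (n' - 1), P i ≤ j * Phat := by
      have := Finset.sum_le_card_nsmul (Finset.Icc 2 (n' - 1)) P Phat
        (fun i hi => hPle i (by simp [Finset.mem_Icc] at hi; omega))
      rw [Nat.card_Icc] at this
      simpa [hn', smul_eq_mul, show j + 1 + 1 - 1 + 1 - 2 = j by omega] using this
    -- final ℕ inequality
    have hnat : C + 2 * (n' - 1) ≤ q + 2 * (n' - 1) * Phat := by
      have h1 : C + 2 * (n' - 1) + P n' ≤ 2 * (P 1 + (∑ i ∈ Finset.Icc 2 (n' - 1), P i + P n')) := by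
        rw [← hsplit]; exact hkey
      have h2 : 2 * (n' - 1) = 2 * (j + 1) := by omega
      have h3 : 2 * (n' - 1) * Phat = 2 * (j * Phat) + 2 * Phat := by
        rw [h2]; ring
      omega
    -- cast to ℤ
    have hcast : (C : ℤ) + 2 * ((j:ℤ) + 1) ≤ (q : ℤ) + 2 * ((j:ℤ) + 1) * (Phat : ℤ) := by
      have h4 : (n' - 1 : ℕ) = j + 1 := by omega
      rw [h4] at hnat
      exact_mod_cast hnat
    push_cast
    have hn'z : ((n' : ℕ) : ℤ) = (j : ℤ) + 1 + 1 := by rw [hn']; push_cast; ring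
    rw [hn'z]
    linarith


end RichWords
end
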